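/- arXiv:1812.08269 — 2 statements merged into one kernel-verified Lean document; each statement's English description precedes it below -/
import Mathlib

section
/- Let Z = ⟨I,F,T,C⟩ be a k-test vector, for some k > 0, and let Z' be the k-test vector obtained from Z by deleting from I all junk prefixes, from F all junk suffixes, and from T all junk segments. Then α_k(γ_k(Z)) = Z'; in particular Z' is canonical. -/
open Set
open scoped symmDiff

/-- A candidate `k`-test vector: a 4-tuple of sets of strings
(`I` prefixes, `F` suffixes, `T` segments, `C` short strings). -/
structure KTV (A : Type*) where
  I : Set (List A)
  F : Set (List A)
  T : Set (List A)
  C : Set (List A)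

variable {A : Type*}

/-- `Z` is a genuine `k`-test vector. -/
def IsKTV (k : ℕ) (Z : KTV A) : Prop :=
  Z.I ⊆ {w : List A | w.length = k - 1} ∧
  Z.F ⊆ {w : List A | w.length = k - 1} ∧
  Z.T ⊆ {w : List A | w.length = k} ∧
  Z.C ⊆ {w : List A | w.length < k} ∧
  Z.I ∩ Z.F = Z.C ∩ {w : List A | w.length = k - 1}

/-- The componentwise order `⊑` on `k`-test vectors. -/
def ktvLE (Z Z' : KTV A) : Prop :=
  Z.I ⊆ Z'.I ∧ Z.F ⊆ Z'.F ∧ Z.T ⊆ Z'.T ∧ Z.C ⊆ Z'.C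

/-- The union `Z ⊔ Z'` of `k`-test vectors. -/
def ktvUnion (Z Z' : KTV A) : KTV A :=
  ⟨Z.I ∪ Z'.I, Z.F ∪ Z'.F, Z.T ∪ Z'.T,
   Z.C ∪ Z'.C ∪ (Z.I ∩ Z'.F) ∪ (Z'.I ∩ Z.F)⟩

/-- The intersection `Z ⊓ Z'` of `k`-test vectors. -/
def ktvInter (Z Z' : KTV A) : KTV A :=
  ⟨Z.I ∩ Z'.I, Z.F ∩ Z'.F, Z.T ∩ Z'.T, Z.C ∩ Z'.C⟩

/-- The symmetric difference `Z △ Z'` of `k`-test vectors. -/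
def ktvSymmDiff (Z Z' : KTV A) : KTV A :=
  ⟨Z.I ∆ Z'.I, Z.F ∆ Z'.F, Z.T ∆ Z'.T,
   Z.C ∆ Z'.C ∆ (Z'.I ∩ Z.F) ∆ (Z.I ∩ Z'.F)⟩

/-- The least `k`-test vector `⊥ = ⟨∅,∅,∅,∅⟩`. -/
def ktvBot (A : Type*) : KTV A := ⟨∅, ∅, ∅, ∅⟩

/-- The greatest `k`-test vector `⊤ = ⟨Σ^{k-1}, Σ^{k-1}, Σ^k, Σ^{<k}⟩`. -/
def ktvTop (A : Type*) (k : ℕ) : KTV A :=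
  ⟨{w | w.length = k - 1}, {w | w.length = k - 1},
   {w | w.length = k}, {w | w.length < k}⟩

/-- `I_k(L)`: length-`(k-1)` prefixes of words of `L`. -/
def Ik (k : ℕ) (L : Set (List A)) : Set (List A) :=
  {u | u.length = k - 1 ∧ ∃ v, u ++ v ∈ L}

/-- `F_k(L)`: length-`(k-1)` suffixes of words of `L`. -/
def Fk (k : ℕ) (L : Set (List A)) : Set (List A) :=
  {w | w.length = k - 1 ∧ ∃ v, v ++ w ∈ L}

/-- `T_k(L)`: length-`k` substrings of words of `L`. -/
def Tk (k : ℕ) (L : Set (List A)) : Set (List A) :=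
  {v | v.length = k ∧ ∃ u w, u ++ v ++ w ∈ L}

/-- `C_k(L) = (L ∩ Σ^{<k-1}) ∪ (I_k(L) ∩ F_k(L))`. -/
def Ck (k : ℕ) (L : Set (List A)) : Set (List A) :=
  (L ∩ {w | w.length < k - 1}) ∪ (Ik k L ∩ Fk k L)

/-- `α_k(L) = ⟨I_k(L), F_k(L), T_k(L), C_k(L)⟩`. -/
def alphaK (k : ℕ) (L : Set (List A)) : KTV A :=
  ⟨Ik k L, Fk k L, Tk k L, Ck k L⟩

/-- `γ_k(Z) = C ∪ ((IΣ* ∩ Σ*F) \ (Σ*(Σ^k \ T)Σ*))`. -/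
def gammaK (k : ℕ) (Z : KTV A) : Set (List A) :=
  Z.C ∪ (({w | ∃ u ∈ Z.I, u <+: w} ∩ {w | ∃ u ∈ Z.F, u <:+ w}) \
    {w | ∃ v, v.length = k ∧ v ∉ Z.T ∧ v <:+: w})

/-- `L` is `k`-testable in the strict sense. -/
def IsKTSS (k : ℕ) (L : Set (List A)) : Prop :=
  ∃ Z : KTV A, IsKTV k Z ∧ gammaK k Z = L

/-- The cardinality `|Z| = |I| + |F| + |T| + |C ∩ Σ^{<k-1}|` of a `k`-test vector. -/
noncomputable def ktvCard (k : ℕ) (Z : KTV A) : ℕ :=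
  Z.I.ncard + Z.F.ncard + Z.T.ncard + (Z.C ∩ {w : List A | w.length < k - 1}).ncard

/-- `u` is a junk prefix of `Z`. -/
def JunkPrefix (k : ℕ) {A : Type*} (Z : KTV A) (u : List A) : Prop :=
  u ∈ Z.I ∧ ¬ ∃ w ∈ gammaK k Z, u <+: w

/-- `u` is a junk suffix of `Z`. -/
def JunkSuffix (k : ℕ) {A : Type*} (Z : KTV A) (u : List A) : Prop :=
  u ∈ Z.F ∧ ¬ ∃ w ∈ gammaK k Z, u <:+ w

/-- `u` is a junk segment of `Z`. -/
def JunkSegment (k : ℕ) {A : Type*} (Z : KTV A) (u : List A) : Prop :=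
  u ∈ Z.T ∧ ¬ ∃ w ∈ gammaK k Z, u <:+: w

/-- `Z` is canonical: no junk prefixes, junk suffixes or junk segments. -/
def Canonical (k : ℕ) {A : Type*} (Z : KTV A) : Prop :=
  (∀ u, ¬ JunkPrefix k Z u) ∧ (∀ u, ¬ JunkSuffix k Z u) ∧ (∀ u, ¬ JunkSegment k Z u)


section Stmt10Aux

variable {A : Type*}

private lemma pfx_eq {p u v : List A} (h : p <+: u ++ v) (hl : p.length = u.length) : p = u := by
  rw [List.prefix_iff_eq_take.mp h, hl, List.take_left]

private lemma sfx_eq {p u v : List A} (h : p <:+ u ++ v) (hl : p.length = v.length) : p = v := by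
  rw [List.suffix_iff_eq_drop.mp h, List.length_append, hl, Nat.add_sub_cancel, List.drop_left]

private lemma mem_gammaK {k : ℕ} {Z : KTV A} {w : List A} :
    w ∈ gammaK k Z ↔ w ∈ Z.C ∨
      ((∃ u ∈ Z.I, u <+: w) ∧ (∃ u ∈ Z.F, u <:+ w) ∧
        ∀ v, v.length = k → v <:+: w → v ∈ Z.T) := by
  simp only [gammaK, Set.mem_union, Set.mem_diff, Set.mem_setOf_eq]
  constructor
  · rintro (h | ⟨⟨h1, h2⟩, h3⟩)
    · exact Or.inl h
    · refine Or.inr ⟨h1, h2, fun v hv hinf => ?_⟩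
      by_contra hT
      exact h3 ⟨v, hv, hT, hinf⟩
  · rintro (h | ⟨h1, h2, h3⟩)
    · exact Or.inl h
    · exact Or.inr ⟨⟨h1, h2⟩, fun ⟨v, hv, hT, hinf⟩ => hT (h3 v hv hinf)⟩

private lemma Ik_gamma {k : ℕ} (hk : 0 < k) {Z : KTV A} (hZ : IsKTV k Z) :
    Ik k (gammaK k Z) = Z.I \ {u | JunkPrefix k Z u} := by
  obtain ⟨hI, hF, hT, hC, hIF⟩ := hZ
  ext u
  constructor
  · rintro ⟨hlen, v, hv⟩
    have hwit : ∃ w ∈ gammaK k Z, u <+: w := ⟨u ++ v, hv, List.prefix_append _ _⟩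
    have hu : u ∈ Z.I := by
      rcases mem_gammaK.mp hv with h | ⟨⟨p, hp, hpw⟩, _, _⟩
      · have hlv : (u ++ v).length < k := hC h
        rw [List.length_append] at hlv
        have hv0 : v = [] := List.length_eq_zero_iff.mp (by omega)
        subst hv0
        rw [List.append_nil] at h
        have : u ∈ Z.I ∩ Z.F := by rw [hIF]; exact ⟨h, hlen⟩
        exact this.1
      · have : p = u := pfx_eq hpw (by rw [hI hp, hlen])
        exact this ▸ hp
    exact ⟨hu, fun hj => hj.2 hwit⟩
  · rintro ⟨hu, hj⟩
    have h : ∃ w ∈ gammaK k Z, u <+: w := by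
      by_contra h
      exact hj ⟨hu, h⟩
    obtain ⟨w, hw, t, ht⟩ := h
    exact ⟨hI hu, t, ht ▸ hw⟩

private lemma Fk_gamma {k : ℕ} (hk : 0 < k) {Z : KTV A} (hZ : IsKTV k Z) :
    Fk k (gammaK k Z) = Z.F \ {u | JunkSuffix k Z u} := by
  obtain ⟨hI, hF, hT, hC, hIF⟩ := hZ
  ext u
  constructor
  · rintro ⟨hlen, v, hv⟩
    have hwit : ∃ w ∈ gammaK k Z, u <:+ w := ⟨v ++ u, hv, List.suffix_append _ _⟩
    have hu : u ∈ Z.F := by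
      rcases mem_gammaK.mp hv with h | ⟨_, ⟨p, hp, hpw⟩, _⟩
      · have hlv : (v ++ u).length < k := hC h
        rw [List.length_append] at hlv
        have hv0 : v = [] := List.length_eq_zero_iff.mp (by omega)
        subst hv0
        rw [List.nil_append] at h
        have : u ∈ Z.I ∩ Z.F := by rw [hIF]; exact ⟨h, hlen⟩
        exact this.2
      · have : p = u := sfx_eq hpw (by rw [hF hp, hlen])
        exact this ▸ hp
    exact ⟨hu, fun hj => hj.2 hwit⟩
  · rintro ⟨hu, hj⟩
    have h : ∃ w ∈ gammaK k Z, u <:+ w := by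
      by_contra h
      exact hj ⟨hu, h⟩
    obtain ⟨w, hw, t, ht⟩ := h
    exact ⟨hF hu, t, ht ▸ hw⟩

private lemma Tk_gamma {k : ℕ} (hk : 0 < k) {Z : KTV A} (hZ : IsKTV k Z) :
    Tk k (gammaK k Z) = Z.T \ {u | JunkSegment k Z u} := by
  obtain ⟨hI, hF, hT, hC, hIF⟩ := hZ
  ext u
  constructor
  · rintro ⟨hlen, p, s, hps⟩
    have hwit : ∃ w ∈ gammaK k Z, u <:+: w := ⟨p ++ u ++ s, hps, ⟨p, s, rfl⟩⟩
    have hu : u ∈ Z.T := by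
      rcases mem_gammaK.mp hps with h | ⟨_, _, h3⟩
      · have hlv : (p ++ u ++ s).length < k := hC h
        simp only [List.length_append] at hlv
        omega
      · exact h3 u hlen ⟨p, s, rfl⟩
    exact ⟨hu, fun hj => hj.2 hwit⟩
  · rintro ⟨hu, hj⟩
    have h : ∃ w ∈ gammaK k Z, u <:+: w := by
      by_contra h
      exact hj ⟨hu, h⟩
    obtain ⟨w, hw, p, s, hps⟩ := h
    exact ⟨hT hu, p, s, hps ▸ hw⟩

private lemma Ck_gamma {k : ℕ} (hk : 0 < k) {Z : KTV A} (hZ : IsKTV k Z) :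
    Ck k (gammaK k Z) = Z.C := by
  obtain ⟨hI, hF, hT, hC, hIF⟩ := hZ
  have hIk := Ik_gamma hk (⟨hI, hF, hT, hC, hIF⟩ : IsKTV k Z)
  have hFk := Fk_gamma hk (⟨hI, hF, hT, hC, hIF⟩ : IsKTV k Z)
  ext w
  constructor
  · rintro (⟨hw, hlen⟩ | ⟨hwI, hwF⟩)
    · rcases mem_gammaK.mp hw with h | ⟨⟨p, hp, hpw⟩, _, _⟩
      · exact h
      · have h1 := hpw.length_le
        have h2 : p.length = k - 1 := hI hp
        simp only [Set.mem_setOf_eq] at hlen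
        omega
    · rw [hIk] at hwI
      rw [hFk] at hwF
      have : w ∈ Z.I ∩ Z.F := ⟨hwI.1, hwF.1⟩
      rw [hIF] at this
      exact this.1
  · intro hw
    have hwL : w ∈ gammaK k Z := Or.inl hw
    have hlen : w.length < k := hC hw
    rcases Nat.lt_or_ge w.length (k - 1) with h | h
    · exact Or.inl ⟨hwL, h⟩
    · have hlen' : w.length = k - 1 := by omega
      have hIFw : w ∈ Z.I ∩ Z.F := by rw [hIF]; exact ⟨hw, hlen'⟩
      refine Or.inr ⟨?_, ?_⟩
      · rw [hIk]
        exact ⟨hIFw.1, fun hj => hj.2 ⟨w, hwL, List.prefix_refl w⟩⟩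
      · rw [hFk]
        exact ⟨hIFw.2, fun hj => hj.2 ⟨w, hwL, List.suffix_refl w⟩⟩

private lemma gamma_prune {k : ℕ} {Z : KTV A} :
    gammaK k (⟨Z.I \ {u | JunkPrefix k Z u}, Z.F \ {u | JunkSuffix k Z u},
        Z.T \ {u | JunkSegment k Z u}, Z.C⟩ : KTV A) = gammaK k Z := by
  ext w
  rw [mem_gammaK, mem_gammaK]
  constructor
  · rintro (h | ⟨⟨u, hu, hupf⟩, ⟨f, hf, hfsf⟩, h3⟩)
    · exact Or.inl h
    · refine Or.inr ⟨⟨u, hu.1, hupf⟩, ⟨f, hf.1, hfsf⟩, fun v hv hinf => (h3 v hv hinf).1⟩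
  · intro hw
    have hwL : w ∈ gammaK k Z := mem_gammaK.mpr hw
    rcases hw with h | ⟨⟨u, hu, hupf⟩, ⟨f, hf, hfsf⟩, h3⟩
    · exact Or.inl h
    · refine Or.inr ⟨⟨u, ⟨hu, fun hj => hj.2 ⟨w, hwL, hupf⟩⟩, hupf⟩,
        ⟨f, ⟨hf, fun hj => hj.2 ⟨w, hwL, hfsf⟩⟩, hfsf⟩,
        fun v hv hinf => ⟨h3 v hv hinf, fun hj => hj.2 ⟨w, hwL, hinf⟩⟩⟩

end Stmt10Aux

/-- deleting all junk prefixes, suffixes and segments from `Z`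
yields exactly `α_k(γ_k(Z))`, which is canonical. -/
theorem stmt10 {A : Type*} [Fintype A] (k : ℕ) (hk : 0 < k)
    (Z : KTV A) (hZ : IsKTV k Z) :
    alphaK k (gammaK k Z) =
      (⟨Z.I \ {u | JunkPrefix k Z u}, Z.F \ {u | JunkSuffix k Z u},
        Z.T \ {u | JunkSegment k Z u}, Z.C⟩ : KTV A) ∧
    Canonical k (⟨Z.I \ {u | JunkPrefix k Z u}, Z.F \ {u | JunkSuffix k Z u},
        Z.T \ {u | JunkSegment k Z u}, Z.C⟩ : KTV A) := by
  constructor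
  · rw [alphaK, Ik_gamma hk hZ, Fk_gamma hk hZ, Tk_gamma hk hZ, Ck_gamma hk hZ]
  · refine ⟨fun u hj => ?_, fun u hj => ?_, fun u hj => ?_⟩
    · have h := hj.2
      rw [gamma_prune] at h
      exact hj.1.2 ⟨hj.1.1, h⟩
    · have h := hj.2
      rw [gamma_prune] at h
      exact hj.1.2 ⟨hj.1.1, h⟩
    · have h := hj.2
      rw [gamma_prune] at h
      exact hj.1.2 ⟨hj.1.1, h⟩
end

section
/- Let k > 0, let L be a k-TSS language over the finite alphabet Σ, and let w_1, w_2, w_3, … be an enumeration of L (a function from the positive integers onto L). Setting L_i = {w_1, …, w_i}, there exists n such that for all m ≥ n, γ_k(α_k(L_m)) = L; moreover L_i ⊆ γ_k(α_k(L_i)) ⊆ L for all i. Hence every k-TSS language is identified in the limit from positive examples by the learner that outputs γ_k(α_k(L_i)). -/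
open Set
open scoped symmDiff

variable {A : Type*}

section Aux
variable {A : Type*}

lemma alpha_mono (k : ℕ) {L L' : Set (List A)} (h : L ⊆ L') :
    ktvLE (alphaK k L) (alphaK k L') := by
  refine ⟨?_, ?_, ?_, ?_⟩
  · rintro u ⟨hu, v, hv⟩; exact ⟨hu, v, h hv⟩
  · rintro u ⟨hu, v, hv⟩; exact ⟨hu, v, h hv⟩
  · rintro u ⟨hu, s, t, hv⟩; exact ⟨hu, s, t, h hv⟩
  · rintro u (⟨h1, h2⟩ | ⟨⟨h1, v, hv⟩, ⟨h2, v', hv'⟩⟩)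
    · exact Or.inl ⟨h h1, h2⟩
    · exact Or.inr ⟨⟨h1, v, h hv⟩, ⟨h2, v', h hv'⟩⟩

lemma gamma_mono (k : ℕ) {Z Z' : KTV A} (h : ktvLE Z Z') :
    gammaK k Z ⊆ gammaK k Z' := by
  obtain ⟨hI, hF, hT, hC⟩ := h
  rintro x (hx | ⟨⟨⟨u, hu, hp⟩, ⟨u', hu', hs⟩⟩, hne⟩)
  · exact Or.inl (hC hx)
  · refine Or.inr ⟨⟨⟨u, hI hu, hp⟩, ⟨u', hF hu', hs⟩⟩, ?_⟩
    rintro ⟨v, hv1, hv2, hv3⟩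
    exact hne ⟨v, hv1, fun hmm => hv2 (hT hmm), hv3⟩

lemma subset_gamma_alpha (k : ℕ) (L : Set (List A)) :
    L ⊆ gammaK k (alphaK k L) := by
  intro x hx
  by_cases hlen : x.length < k - 1
  · exact Or.inl (Or.inl ⟨hx, hlen⟩)
  · push_neg at hlen
    refine Or.inr ⟨⟨⟨x.take (k-1), ⟨?_, x.drop (k-1), by simp [hx]⟩, List.take_prefix _ _⟩,
      ⟨x.drop (x.length - (k-1)), ⟨?_, x.take (x.length - (k-1)), by simp [hx]⟩,
        List.drop_suffix _ _⟩⟩, ?_⟩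
    · simp [Nat.min_eq_left hlen]
    · simp [Nat.sub_sub_self hlen]
    · rintro ⟨v, hv1, hv2, s, t, hv3⟩
      exact hv2 ⟨hv1, s, t, by rw [hv3]; exact hx⟩

lemma alpha_le_of_gamma (k : ℕ) {Z : KTV A} (hZ : IsKTV k Z) :
    ktvLE (alphaK k (gammaK k Z)) Z := by
  obtain ⟨hZI, hZF, hZT, hZC, hZE⟩ := hZ
  have hI : Ik k (gammaK k Z) ⊆ Z.I := by
    rintro u ⟨hu, v, (hv | ⟨⟨⟨u', hu', hp⟩, -⟩, -⟩)⟩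
    · have hlt : (u ++ v).length < k := hZC hv
      have hv0 : v = [] := by
        rw [List.length_append] at hlt
        have : v.length = 0 := by omega
        exact List.length_eq_zero_iff.mp this
      rw [hv0, List.append_nil] at hv
      have h2 : u ∈ Z.C ∩ {w : List A | w.length = k - 1} := ⟨hv, hu⟩
      rw [← hZE] at h2
      exact h2.1
    · have h1 : u' <+: u := List.prefix_of_prefix_length_le hp (List.prefix_append u v)
        (by rw [hZI hu', hu])
      have h2 : u' = u := h1.eq_of_length (by rw [hZI hu', hu])
      exact h2 ▸ hu'
  have hF : Fk k (gammaK k Z) ⊆ Z.F := by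
    rintro u ⟨hu, v, (hv | ⟨⟨-, ⟨u', hu', hs⟩⟩, -⟩)⟩
    · have hlt : (v ++ u).length < k := hZC hv
      have hv0 : v = [] := by
        rw [List.length_append] at hlt
        have : v.length = 0 := by omega
        exact List.length_eq_zero_iff.mp this
      rw [hv0, List.nil_append] at hv
      have h2 : u ∈ Z.C ∩ {w : List A | w.length = k - 1} := ⟨hv, hu⟩
      rw [← hZE] at h2
      exact h2.2
    · have h1 : u' <:+ u := List.suffix_of_suffix_length_le hs (List.suffix_append v u)
        (by rw [hZF hu', hu])
      have h2 : u' = u := h1.eq_of_length (by rw [hZF hu', hu])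
      exact h2 ▸ hu'
  have hT : Tk k (gammaK k Z) ⊆ Z.T := by
    rintro t ⟨ht, s, r, (hv | ⟨-, hne⟩)⟩
    · have h2 := hZC hv
      simp only [Set.mem_setOf_eq, List.length_append] at h2
      omega
    · by_contra hTT
      exact hne ⟨t, ht, hTT, s, r, rfl⟩
  refine ⟨hI, hF, hT, ?_⟩
  rintro x (⟨hx1, hx2⟩ | ⟨hxI, hxF⟩)
  · rcases hx1 with hx | ⟨⟨⟨u, hu, hp⟩, -⟩, -⟩
    · exact hx
    · have h2 := hp.length_le
      rw [hZI hu] at h2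
      simp only [Set.mem_setOf_eq] at hx2
      omega
  · have h2 : x ∈ Z.I ∩ Z.F := ⟨hI hxI, hF hxF⟩
    rw [hZE] at h2
    exact h2.1

lemma gamma_alpha_eq (k : ℕ) {L : Set (List A)} (hL : IsKTSS k L) :
    gammaK k (alphaK k L) = L := by
  obtain ⟨Z, hZ, rfl⟩ := hL
  exact Set.Subset.antisymm (gamma_mono k (alpha_le_of_gamma k hZ))
    (subset_gamma_alpha k _)

lemma alpha_eq_of_between (k : ℕ) {D L L' : Set (List A)} (hD : D ⊆ L')
    (hL' : L' ⊆ L)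
    (hI : Ik k L ⊆ Ik k D) (hF : Fk k L ⊆ Fk k D) (hT : Tk k L ⊆ Tk k D)
    (hC : L ∩ {w : List A | w.length < k - 1} ⊆ D) :
    alphaK k L' = alphaK k L := by
  have mD := alpha_mono (A := A) k hD
  have mL := alpha_mono (A := A) k hL'
  have eI : Ik k L' = Ik k L :=
    Set.Subset.antisymm mL.1 (fun u hu => mD.1 (hI hu))
  have eF : Fk k L' = Fk k L :=
    Set.Subset.antisymm mL.2.1 (fun u hu => mD.2.1 (hF hu))
  have eT : Tk k L' = Tk k L :=
    Set.Subset.antisymm mL.2.2.1 (fun u hu => mD.2.2.1 (hT hu))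
  have eC : Ck k L' = Ck k L := by
    unfold Ck
    rw [eI, eF]
    congr 1
    apply Set.Subset.antisymm
    · exact Set.inter_subset_inter_left _ hL'
    · intro x hx
      exact ⟨hD (hC hx), hx.2⟩
  unfold alphaK
  rw [eI, eF, eT, eC]

end Aux

/-- every `k`-TSS language is identified in the limit from positive
examples by the learner that outputs `γ_k(α_k(L_i))`. -/
theorem stmt11 {A : Type*} [Fintype A] (k : ℕ) (hk : 0 < k)
    (L : Set (List A)) (hL : IsKTSS k L)
    (w : ℕ → List A) (hmem : ∀ i, w i ∈ L) (hsurj : ∀ x ∈ L, ∃ i, w i = x) :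
    (∀ i : ℕ, {x | ∃ j < i, w j = x} ⊆ gammaK k (alphaK k {x | ∃ j < i, w j = x}) ∧
      gammaK k (alphaK k {x | ∃ j < i, w j = x}) ⊆ L) ∧
    ∃ n : ℕ, ∀ m ≥ n, gammaK k (alphaK k {x | ∃ j < m, w j = x}) = L := by
    classical
  have hsub : ∀ i : ℕ, {x | ∃ j < i, w j = x} ⊆ L := by
    rintro i x ⟨j, -, rfl⟩; exact hmem j
  constructor
  · intro i
    refine ⟨subset_gamma_alpha k _, ?_⟩
    calc gammaK k (alphaK k {x | ∃ j < i, w j = x})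
        ⊆ gammaK k (alphaK k L) := gamma_mono k (alpha_mono k (hsub i))
      _ = L := gamma_alpha_eq k hL
  · have hIfin : (Ik k L).Finite :=
      (List.finite_length_eq A (k-1)).subset (fun u hu => hu.1)
    have hFfin : (Fk k L).Finite :=
      (List.finite_length_eq A (k-1)).subset (fun u hu => hu.1)
    have hTfin : (Tk k L).Finite :=
      (List.finite_length_eq A k).subset (fun u hu => hu.1)
    have hCfin : (L ∩ {x : List A | x.length < k - 1}).Finite :=
      (List.finite_length_lt A (k-1)).subset (fun u hu => hu.2)
    let fI : List A → List A := fun u =>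
      if h : ∃ v, u ++ v ∈ L then u ++ h.choose else []
    let fF : List A → List A := fun u =>
      if h : ∃ v, v ++ u ∈ L then h.choose ++ u else []
    let fT : List A → List A := fun t =>
      if h : ∃ s r, s ++ t ++ r ∈ L then h.choose ++ t ++ h.choose_spec.choose else []
    let D : Set (List A) := fI '' Ik k L ∪ fF '' Fk k L ∪ fT '' Tk k L ∪
      (L ∩ {x : List A | x.length < k - 1})
    have hDfin : D.Finite :=
      (((hIfin.image fI).union (hFfin.image fF)).union (hTfin.image fT)).union hCfin
    have hDL : D ⊆ L := by
      rintro x (((⟨u, hu, rfl⟩ | ⟨u, hu, rfl⟩) | ⟨t, ht, rfl⟩) | hx)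
      · simp only [fI, dif_pos hu.2]; exact hu.2.choose_spec
      · simp only [fF, dif_pos hu.2]; exact hu.2.choose_spec
      · simp only [fT, dif_pos ht.2]; exact ht.2.choose_spec.choose_spec
      · exact hx.1
    have key : ∀ L' : Set (List A), D ⊆ L' → L' ⊆ L →
        gammaK k (alphaK k L') = L := by
      intro L' h1 h2
      have hI : Ik k L ⊆ Ik k D := by
        rintro u ⟨hu, v, hv⟩
        have hex : ∃ v, u ++ v ∈ L := ⟨v, hv⟩
        refine ⟨hu, hex.choose, Or.inl (Or.inl (Or.inl ⟨u, ⟨hu, hex⟩, ?_⟩))⟩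
        simp [fI, dif_pos hex]
      have hF : Fk k L ⊆ Fk k D := by
        rintro u ⟨hu, v, hv⟩
        have hex : ∃ v, v ++ u ∈ L := ⟨v, hv⟩
        refine ⟨hu, hex.choose, Or.inl (Or.inl (Or.inr ⟨u, ⟨hu, hex⟩, ?_⟩))⟩
        simp [fF, dif_pos hex]
      have hT : Tk k L ⊆ Tk k D := by
        rintro t ⟨ht, s, r, hv⟩
        have hex : ∃ s r, s ++ t ++ r ∈ L := ⟨s, r, hv⟩
        refine ⟨ht, hex.choose, hex.choose_spec.choose,
          Or.inl (Or.inr ⟨t, ⟨ht, hex⟩, ?_⟩)⟩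
        simp only [fT]; rw [dif_pos hex]
      have hC : L ∩ {x : List A | x.length < k - 1} ⊆ D := fun x hx => Or.inr hx
      rw [alpha_eq_of_between k h1 h2 hI hF hT hC]
      exact gamma_alpha_eq k hL
    let g : List A → ℕ := fun x => if h : ∃ i, w i = x then h.choose else 0
    refine ⟨hDfin.toFinset.sup g + 1, fun m hm => ?_⟩
    apply key
    · intro x hx
      have hex : ∃ i, w i = x := hsurj x (hDL hx)
      refine ⟨g x, ?_, ?_⟩
      · have h3 : g x ≤ hDfin.toFinset.sup g :=
          Finset.le_sup (hDfin.mem_toFinset.mpr hx)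
        omega
      · simp only [g, dif_pos hex]; exact hex.choose_spec
    · exact hsub m
end
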